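/- For two row-stochastic matrices P₁, P₂ and α ∈ (0,1), the corresponding PageRank vectors π₁, π₂ (with the same teleport probability vector z) satisfy ‖π₁ - π₂‖₁ ≤ (α/(1-α))·‖(P₁ - P₂)ᵀ π₂‖₁. -/

import Mathlib

open Matrix

theorem pagerank_perturbation_bound {N : ℕ} (P₁ P₂ : Matrix (Fin N) (Fin N) ℝ)
    (h1nonneg : ∀ i j, 0 ≤ P₁ i j) (h1row : ∀ i, ∑ j, P₁ i j = 1)
    (h2nonneg : ∀ i j, 0 ≤ P₂ i j) (h2row : ∀ i, ∑ j, P₂ i j = 1)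
    (α : ℝ) (hα0 : 0 < α) (hα1 : α < 1) (z π₁ π₂ : Fin N → ℝ)
    (hπ₁ : π₁ = α • P₁ᵀ.mulVec π₁ + (1 - α) • z)
    (hπ₂ : π₂ = α • P₂ᵀ.mulVec π₂ + (1 - α) • z) :
    ∑ i, |π₁ i - π₂ i| ≤ (α / (1 - α)) * ∑ i, |(P₁ - P₂)ᵀ.mulVec π₂ i| := by
  set d : Fin N → ℝ := fun i => π₁ i - π₂ i with hd
  set e : Fin N → ℝ := fun i => (P₁ - P₂)ᵀ.mulVec π₂ i with he
  have hkey : ∀ i, d i = α * (P₁ᵀ.mulVec d i) + α * e i := by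
    intro i
    have h1 := congrFun hπ₁ i
    have h2 := congrFun hπ₂ i
    simp only [Pi.add_apply, Pi.smul_apply, smul_eq_mul] at h1 h2
    simp only [hd, he, mulVec, dotProduct, transpose_apply, Matrix.sub_apply]
    simp only [mulVec, dotProduct, transpose_apply] at h1 h2
    rw [h1, h2]
    simp only [Finset.mul_sum]
    rw [add_sub_add_right_eq_sub, ← Finset.sum_sub_distrib, ← Finset.sum_add_distrib]
    apply Finset.sum_congr rfl
    intro j _
    ring
  -- bound on sum of |P₁ᵀ d|
  have hcol : ∑ i, |P₁ᵀ.mulVec d i| ≤ ∑ j, |d j| := by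
    calc ∑ i, |P₁ᵀ.mulVec d i| ≤ ∑ i, ∑ j, P₁ j i * |d j| := by
          apply Finset.sum_le_sum
          intro i _
          simp only [mulVec, dotProduct, transpose_apply]
          calc |∑ j, P₁ j i * d j| ≤ ∑ j, |P₁ j i * d j| := Finset.abs_sum_le_sum_abs _ _
            _ = ∑ j, P₁ j i * |d j| := by
                apply Finset.sum_congr rfl
                intro j _
                rw [abs_mul, abs_of_nonneg (h1nonneg j i)]
      _ = ∑ j, |d j| := by
          rw [Finset.sum_comm]
          apply Finset.sum_congr rfl
          intro j _
          rw [← Finset.sum_mul, h1row j, one_mul]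
  have hS : ∑ i, |d i| ≤ α * (∑ i, |d i|) + α * ∑ i, |e i| := by
    calc ∑ i, |d i| = ∑ i, |α * (P₁ᵀ.mulVec d i) + α * e i| := by
          apply Finset.sum_congr rfl; intro i _; rw [← hkey i]
      _ ≤ ∑ i, (α * |P₁ᵀ.mulVec d i| + α * |e i|) := by
          apply Finset.sum_le_sum
          intro i _
          calc |α * (P₁ᵀ.mulVec d i) + α * e i| ≤ |α * (P₁ᵀ.mulVec d i)| + |α * e i| :=
                abs_add_le _ _
            _ = α * |P₁ᵀ.mulVec d i| + α * |e i| := by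
                rw [abs_mul, abs_mul, abs_of_pos hα0]
      _ = α * (∑ i, |P₁ᵀ.mulVec d i|) + α * ∑ i, |e i| := by
          rw [Finset.sum_add_distrib, ← Finset.mul_sum, ← Finset.mul_sum]
      _ ≤ α * (∑ i, |d i|) + α * ∑ i, |e i| := by
          gcongr
  have h1α : 0 < 1 - α := by linarith
  rw [div_mul_eq_mul_div, le_div_iff₀ h1α]
  nlinarith [hS]
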